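/- Every semiprojective group is a retract of the free product of a finitely presented group and a free group. -/

import Mathlib

private lemma freeGroup_mem_closure_letters {α : Type*} (B : Set α) :
    ∀ (L : List (α × Bool)), (∀ p ∈ L, p.1 ∈ B) →
      FreeGroup.mk L ∈ Subgroup.closure (FreeGroup.of '' B) := by
  intro L
  induction L with
  | nil =>
    intro _
    rw [← FreeGroup.one_eq_mk]; exact one_mem _
  | cons p L ih =>
    intro h
    have hsplit : FreeGroup.mk (p :: L) = FreeGroup.mk [p] * FreeGroup.mk L := by
      rw [FreeGroup.mul_mk]; rfl
    rw [hsplit]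
    refine mul_mem ?_ (ih fun q hq => h q (List.mem_cons_of_mem _ hq))
    have hp : FreeGroup.of p.1 ∈ FreeGroup.of '' B :=
      ⟨p.1, h p List.mem_cons_self, rfl⟩
    obtain ⟨a, b⟩ := p
    cases b with
    | false =>
      have h2 : FreeGroup.mk [(a, false)] = (FreeGroup.of a)⁻¹ := by
        rw [show FreeGroup.of a = FreeGroup.mk [(a, true)] from rfl, FreeGroup.inv_mk]
        simp [FreeGroup.invRev]
      rw [h2]
      exact inv_mem (Subgroup.subset_closure hp)
    | true => exact Subgroup.subset_closure hp

theorem semiprojective_group_retract_of_fp_free_product (G : Type) [Group G]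
    (hsp : ∀ (I : Type) (_ : Preorder I) (_ : IsDirected I (· ≤ ·)) (_ : Nonempty I)
      (H : I → Type) (instH : ∀ i, Group (H i))
      (f : ∀ i j, i ≤ j → (H i →* H j)),
      (∀ i (x : H i), f i i le_rfl x = x) →
      (∀ i j k (hij : i ≤ j) (hjk : j ≤ k) (x : H i),
        f j k hjk (f i j hij x) = f i k (hij.trans hjk) x) →
      (∀ i j (hij : i ≤ j), Function.Surjective (f i j hij)) →
      ∀ (L : Type) (_ : Group L) (π : ∀ i, H i →* L),
        (∀ i j (hij : i ≤ j), (π j).comp (f i j hij) = π i) →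
        (∀ x : L, ∃ i y, π i y = x) →
        (∀ i (x : H i), π i x = 1 → ∃ j, ∃ hij : i ≤ j, f i j hij x = 1) →
        ∀ φ : G →* L, ∃ (i : I) (φt : G →* H i), (π i).comp φt = φ) :
    ∃ (n : ℕ) (rels : Finset (FreeGroup (Fin n))) (ι : Type)
      (α : G →* Monoid.Coprod (PresentedGroup (rels : Set (FreeGroup (Fin n)))) (FreeGroup ι))
      (β : Monoid.Coprod (PresentedGroup (rels : Set (FreeGroup (Fin n)))) (FreeGroup ι) →* G),
      β.comp α = MonoidHom.id G := by
  classical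
  set φ : FreeGroup G →* G := FreeGroup.lift id with hφ
  set Kr : Type := {x : FreeGroup G // φ x = 1} with hKr
  set I : Type := Finset Kr with hI
  set N : I → Subgroup (FreeGroup G) :=
    fun i => Subgroup.normalClosure (Subtype.val '' (i : Set Kr)) with hN
  haveI hNnormal : ∀ i, (N i).Normal := fun i => Subgroup.normalClosure_normal
  set H : I → Type := fun i => FreeGroup G ⧸ N i with hH
  have hle : ∀ i j : I, i ≤ j → N i ≤ N j := by
    intro i j hij
    exact Subgroup.normalClosure_mono (Set.image_mono hij)
  set f : ∀ i j : I, i ≤ j → (H i →* H j) :=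
    fun i j hij => QuotientGroup.map (N i) (N j) (MonoidHom.id _)
      (by rw [Subgroup.comap_id]; exact hle i j hij) with hf
  have hfmk : ∀ (i j : I) (hij : i ≤ j) (x : FreeGroup G),
      f i j hij (QuotientGroup.mk x) = QuotientGroup.mk x := by
    intro i j hij x
    show QuotientGroup.map _ _ _ _ _ = _
    rw [QuotientGroup.map_mk]
    rfl
  have hkerφ : ∀ i : I, N i ≤ φ.ker := by
    intro i
    refine Subgroup.normalClosure_le_normal ?_
    rintro x ⟨y, _, rfl⟩
    exact y.2
  set π : ∀ i : I, H i →* G := fun i => QuotientGroup.lift (N i) φ (hkerφ i) with hπ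
  obtain ⟨i, φt, hφt⟩ := hsp I inferInstance inferInstance ⟨∅⟩ H (fun i => inferInstance) f
    (by
      intro i x
      refine QuotientGroup.induction_on x fun w => ?_
      exact hfmk i i le_rfl w)
    (by
      intro i j k hij hjk x
      refine QuotientGroup.induction_on x fun w => ?_
      rw [hfmk i j hij, hfmk j k hjk, hfmk i k (hij.trans hjk)])
    (by
      intro i j hij x
      refine QuotientGroup.induction_on x fun w => ?_
      exact ⟨QuotientGroup.mk w, hfmk i j hij w⟩)
    G inferInstance π
    (by
      intro i j hij
      refine QuotientGroup.monoidHom_ext _ ?_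
      ext w
      show (π j) ((f i j hij) (QuotientGroup.mk (FreeGroup.of w))) = π i (QuotientGroup.mk (FreeGroup.of w))
      rw [hfmk i j hij]
      show φ (FreeGroup.of w) = φ (FreeGroup.of w)
      rfl)
    (by
      intro x
      refine ⟨∅, QuotientGroup.mk (FreeGroup.of x), ?_⟩
      show φ (FreeGroup.of x) = x
      simp [hφ])
    (by
      intro i x hx
      obtain ⟨w, rfl⟩ := QuotientGroup.mk_surjective x
      have hw : φ w = 1 := by exact hx
      refine ⟨insert (⟨w, hw⟩ : Kr) i, Finset.le_iff_subset.mpr (Finset.subset_insert _ _), ?_⟩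
      rw [hfmk i (insert (⟨w, hw⟩ : Kr) i) (Finset.le_iff_subset.mpr (Finset.subset_insert _ _)) w]
      rw [QuotientGroup.eq_one_iff]
      exact Subgroup.subset_normalClosure
        ⟨⟨w, hw⟩, Finset.mem_coe.mpr (Finset.mem_insert_self _ _), rfl⟩)
    (MonoidHom.id G)
  -- letters occurring in the relators
  set T : Finset G := i.biUnion (fun r => (r.val.toWord.map Prod.fst).toFinset) with hT
  set nn : ℕ := Fintype.card ↥T with hnn
  set e : ↥T ≃ Fin nn := Fintype.equivFin ↥T with he
  set ρ : FreeGroup G →* FreeGroup (Fin nn) :=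
    FreeGroup.lift (fun g => if h : g ∈ T then FreeGroup.of (e ⟨g, h⟩) else 1) with hρ
  set rels : Finset (FreeGroup (Fin nn)) := i.image (fun r => ρ r.val) with hrels
  set ι : Type := {g : G // g ∉ T} with hι
  set P : Type := PresentedGroup (rels : Set (FreeGroup (Fin nn))) with hP
  set mkP : FreeGroup (Fin nn) →* P := PresentedGroup.mk (rels : Set (FreeGroup (Fin nn))) with hmkP
  set K : Type := Monoid.Coprod P (FreeGroup ι) with hK
  set ψ : FreeGroup G →* K :=
    FreeGroup.lift (fun g =>
      if h : g ∈ T then Monoid.Coprod.inl (mkP (FreeGroup.of (e ⟨g, h⟩)))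
      else Monoid.Coprod.inr (FreeGroup.of (⟨g, h⟩ : ι))) with hψ
  have hletters : ∀ r ∈ i, ∀ p ∈ (r : Kr).val.toWord, p.1 ∈ (T : Set G) := by
    intro r hr p hp
    simp only [hT, Finset.coe_biUnion, Set.mem_iUnion, Finset.mem_coe]
    exact ⟨r, hr, List.mem_toFinset.mpr (List.mem_map_of_mem hp)⟩
  have hmemcl : ∀ r ∈ i, (r : Kr).val ∈ Subgroup.closure (FreeGroup.of '' (T : Set G)) := by
    intro r hr
    have := freeGroup_mem_closure_letters (T : Set G) (r : Kr).val.toWord (hletters r hr)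
    rwa [FreeGroup.mk_toWord] at this
  -- key computations on generators
  have hψof : ∀ (g : G) (h : g ∈ T),
      ψ (FreeGroup.of g) = Monoid.Coprod.inl (mkP (FreeGroup.of (e ⟨g, h⟩))) := by
    intro g h
    simp [hψ, dif_pos h]
  have hρof : ∀ (g : G) (h : g ∈ T), ρ (FreeGroup.of g) = FreeGroup.of (e ⟨g, h⟩) := by
    intro g h
    simp [hρ, dif_pos h]
  have h1 : ∀ r ∈ i, ψ (r : Kr).val = Monoid.Coprod.inl (mkP (ρ (r : Kr).val)) := by
    intro r hr
    refine Subgroup.closure_induction ?_ ?_ ?_ ?_ (hmemcl r hr)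
    · rintro x ⟨g, hg, rfl⟩
      rw [hψof g hg, hρof g hg]
    · simp
    · intro x y _ _ hx hy
      simp [hx, hy]
    · intro x _ hx
      simp [hx]
  have h2 : ∀ r ∈ i, mkP (ρ (r : Kr).val) = 1 := by
    intro r hr
    have hmem : ρ (r : Kr).val ∈ (rels : Set (FreeGroup (Fin nn))) := by
      simp only [hrels, Finset.coe_image, Set.mem_image, Finset.mem_coe]
      exact ⟨r, hr, rfl⟩
    exact (QuotientGroup.eq_one_iff _).mpr (Subgroup.subset_normalClosure hmem)
  have hkerψ : N i ≤ ψ.ker := by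
    refine Subgroup.normalClosure_le_normal ?_
    rintro x ⟨r, hr, rfl⟩
    rw [SetLike.mem_coe, MonoidHom.mem_ker, h1 r hr, h2 r hr, map_one]
  set θ : H i →* K := QuotientGroup.lift (N i) ψ hkerψ with hθ
  -- β
  have hβPrel : ∀ r ∈ (rels : Set (FreeGroup (Fin nn))),
      FreeGroup.lift (fun k : Fin nn => ((e.symm k : ↥T) : G)) r = 1 := by
    intro x hx
    simp only [hrels, Finset.coe_image, Set.mem_image, Finset.mem_coe] at hx
    obtain ⟨r, hr, rfl⟩ := hx
    have : (FreeGroup.lift (fun k : Fin nn => ((e.symm k : ↥T) : G))) (ρ (r : Kr).val)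
        = φ (r : Kr).val := by
      refine Subgroup.closure_induction ?_ ?_ ?_ ?_ (hmemcl r hr)
      · rintro x ⟨g, hg, rfl⟩
        rw [hρof g hg]
        simp [hφ]
      · simp
      · intro x y _ _ hx hy
        simp [hx, hy]
      · intro x _ hx
        simp [hx]
    rw [this]
    exact (r : Kr).2
  set βP : P →* G := PresentedGroup.toGroup hβPrel with hβP
  set β : K →* G := Monoid.Coprod.lift βP (FreeGroup.lift (Subtype.val : ι → G)) with hβ
  have hβθ : β.comp θ = π i := by
    refine QuotientGroup.monoidHom_ext _ ?_
    refine FreeGroup.ext_hom _ _ fun g => ?_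
    simp only [MonoidHom.comp_apply, QuotientGroup.mk'_apply]
    rw [show (θ (QuotientGroup.mk (FreeGroup.of g)) : K) = ψ (FreeGroup.of g) from
      QuotientGroup.lift_mk' _ _ _]
    have hπg : π i (QuotientGroup.mk (FreeGroup.of g)) = g := by
      show φ (FreeGroup.of g) = g
      simp [hφ]
    rw [hπg]
    by_cases h : g ∈ T
    · rw [hψof g h, hβ, Monoid.Coprod.lift_apply_inl]
      have : mkP (FreeGroup.of (e ⟨g, h⟩)) = PresentedGroup.of (e ⟨g, h⟩) := rfl
      rw [this, hβP, PresentedGroup.toGroup.of]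
      simp
    · rw [hψ]
      rw [FreeGroup.lift_apply_of]
      rw [dif_neg h, hβ, Monoid.Coprod.lift_apply_inr, FreeGroup.lift_apply_of]
  refine ⟨nn, rels, ι, θ.comp φt, β, ?_⟩
  rw [← MonoidHom.comp_assoc, hβθ, hφt]
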